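/- Let p_k = (1−σ_k)(1−σ_{k−1})···(1−σ_2) in the rational group algebra of the symmetric group S_k, where σ_i = (1 2 ··· i) is the i-cycle. Then p_k² = k·p_k. -/

import Mathlib

set_option linter.unusedSectionVars false

noncomputable section DynkinAux
open FreeAlgebra MulOpposite List

variable {n : ℕ}

abbrev AA (n : ℕ) := FreeAlgebra ℚ (Fin (n + 1))
abbrev MAn (n : ℕ) := MonoidAlgebra ℚ (Equiv.Perm (Fin (n + 1)))

def gen (x : Fin (n+1)) : AA n := FreeAlgebra.ι ℚ x

def wmon (l : List (Fin (n+1))) : AA n := (l.map gen).prod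

def cm (u : AA n) (l : List (Fin (n+1))) : AA n :=
  l.foldl (fun v y => v * gen y - gen y * v) u

def cbr : List (Fin (n+1)) → AA n
  | [] => 0
  | x :: l => cm (gen x) l

@[simp] lemma cm_nil (u : AA n) : cm u [] = u := rfl
@[simp] lemma cm_cons (u : AA n) (y l) :
    cm u (y :: l) = cm (u * gen y - gen y * u) l := rfl

lemma cm_sub (a b : AA n) (l) : cm (a - b) l = cm a l - cm b l := by
  induction l generalizing a b with
  | nil => rfl
  | cons y l ih =>
    simp only [cm_cons]
    rw [← ih]
    congr 1
    noncomm_ring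

@[simp] lemma wmon_nil : wmon (n := n) [] = 1 := rfl
@[simp] lemma wmon_cons (x l) : wmon (n := n) (x :: l) = gen x * wmon l := by
  simp [wmon]
@[simp] lemma wmon_append (l₁ l₂) : wmon (n := n) (l₁ ++ l₂) = wmon l₁ * wmon l₂ := by
  simp [wmon]

def bFM : Module.Basis (FreeMonoid (Fin (n+1))) ℚ (AA n) := FreeAlgebra.basisFreeMonoid ℚ _

lemma equiv_wmon (l : List (Fin (n+1))) :
    FreeAlgebra.equivMonoidAlgebraFreeMonoid (wmon l)
      = MonoidAlgebra.single (FreeMonoid.ofList l) 1 := by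
  induction l with
  | nil =>
    rw [wmon_nil, map_one, FreeMonoid.ofList_nil, MonoidAlgebra.one_def]
  | cons x l ih =>
    rw [wmon_cons, map_mul, ih]
    rw [FreeAlgebra.equivMonoidAlgebraFreeMonoid]
    show (FreeAlgebra.lift ℚ fun x => (MonoidAlgebra.of ℚ (FreeMonoid (Fin (n+1)))) (FreeMonoid.of x))
        (gen x) * _ = _
    rw [gen, FreeAlgebra.lift_ι_apply, MonoidAlgebra.of_apply, MonoidAlgebra.single_mul_single,
      one_mul, FreeMonoid.ofList_cons]

lemma wmon_eq_basis (l : List (Fin (n+1))) : wmon l = bFM (FreeMonoid.ofList l) := by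
  apply (FreeAlgebra.equivMonoidAlgebraFreeMonoid (R := ℚ) (X := Fin (n+1))).injective
  rw [equiv_wmon, bFM, FreeAlgebra.basisFreeMonoid, Module.Basis.map_apply]
  simp only [Finsupp.coe_basisSingleOne, AlgEquiv.toLinearEquiv_apply,
    AlgEquiv.apply_symm_apply]
  exact (AlgEquiv.apply_symm_apply _ _).symm


/-- The bracketing operator. -/
def BB : AA n →ₗ[ℚ] AA n :=
  (bFM (n := n)).constr ℚ (fun m => cbr (FreeMonoid.toList m))

@[simp] lemma BB_wmon (l : List (Fin (n+1))) : BB (wmon l) = cbr l := by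
  rw [wmon_eq_basis, BB, Module.Basis.constr_basis]
  rfl

def eps : AA n →ₐ[ℚ] ℚ := FreeAlgebra.lift ℚ (fun _ => (0 : ℚ))

@[simp] lemma eps_gen (x : Fin (n+1)) : eps (gen x) = 0 := by
  rw [eps, gen, FreeAlgebra.lift_ι_apply]

def adE (u : AA n) : Module.End ℚ (AA n) :=
  LinearMap.mulLeft ℚ u - LinearMap.mulRight ℚ u

@[simp] lemma adE_apply (u v : AA n) : adE u v = u * v - v * u := rfl

def GG : AA n →ₐ[ℚ] (Module.End ℚ (AA n))ᵐᵒᵖ :=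
  FreeAlgebra.lift ℚ (fun x => MulOpposite.op (-adE (gen x)))

@[simp] lemma GG_gen (x : Fin (n+1)) : GG (gen x) = MulOpposite.op (-adE (gen x)) :=
  FreeAlgebra.lift_ι_apply _ _

lemma GG_fold (m : List (Fin (n+1))) (v : AA n) :
    (GG (wmon m)).unop v = cm v m := by
  induction m generalizing v with
  | nil => simp
  | cons y m ih =>
    rw [wmon_cons, map_mul, cm_cons]
    simp only [GG_gen, MulOpposite.unop_mul, MulOpposite.unop_op, Module.End.mul_apply,
      LinearMap.neg_apply, adE_apply, neg_sub]
    exact ih _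

lemma L0 (x : Fin (n+1)) (Y : AA n) : BB (gen x * Y) = (GG Y).unop (gen x) := by
  have h1 : (BB (n := n)).comp (LinearMap.mulLeft ℚ (gen x))
      = { toFun := fun Y => (GG (n := n) Y).unop (gen x),
          map_add' := by intros; simp,
          map_smul' := by intros; simp } := by
    apply (bFM (n := n)).ext
    intro m
    have hb : bFM m = wmon (FreeMonoid.toList m) := by exact (wmon_eq_basis _).symm
    rw [hb]
    simp only [LinearMap.comp_apply, LinearMap.mulLeft_apply, LinearMap.coe_mk, AddHom.coe_mk]
    rw [← wmon_cons, BB_wmon, GG_fold]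
    rfl
  exact DFunLike.congr_fun h1 Y

lemma L2 (Xv Y : AA n) :
    BB (Xv * Y) = (GG Y).unop (BB Xv) + eps Xv • BB Y := by
  have key : ∀ l : List (Fin (n+1)),
      BB (wmon l * Y) = (GG Y).unop (BB (wmon l)) + eps (wmon l) • BB Y := by
    intro l
    cases l with
    | nil => rw [wmon_nil, one_mul, ← wmon_nil, BB_wmon]; simp [cbr]
    | cons x l =>
      rw [wmon_cons, mul_assoc, L0 x (wmon l * Y), map_mul]
      simp only [MulOpposite.unop_mul, Module.End.mul_apply]
      rw [← L0, ← wmon_cons, BB_wmon]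
      have he : eps (gen x * wmon (n := n) l) = 0 := by rw [map_mul, eps_gen, zero_mul]
      rw [wmon_cons, he, zero_smul, add_zero]
  have h1 : (BB (n := n)).comp (LinearMap.mulRight ℚ Y)
      = ((GG Y).unop.comp BB) + (eps (n := n)).toLinearMap.smulRight (BB Y) := by
    apply (bFM (n := n)).ext
    intro m
    have hb : bFM m = wmon (FreeMonoid.toList m) := by exact (wmon_eq_basis _).symm
    rw [hb]
    simpa using key (FreeMonoid.toList m)
  simpa using DFunLike.congr_fun h1 Xv


/-- Homogeneous Lie elements of the free algebra. -/
inductive IsLie : ℕ → AA n → Prop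
  | of (x : Fin (n+1)) : IsLie 1 (gen x)
  | brk {r s : ℕ} {u v : AA n} : IsLie r u → IsLie s v → IsLie (r + s) (u * v - v * u)

lemma GG_isLie {r : ℕ} {u : AA n} (h : IsLie r u) : GG u = MulOpposite.op (-adE u) := by
  induction h with
  | of x => exact GG_gen x
  | @brk r s u v hu hv ihu ihv =>
    rw [map_sub, map_mul, map_mul, ihu, ihv]
    rw [← MulOpposite.op_mul, ← MulOpposite.op_mul, ← MulOpposite.op_sub]
    congr 1
    apply LinearMap.ext
    intro w
    simp only [Module.End.mul_apply, LinearMap.sub_apply, LinearMap.neg_apply, adE_apply]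
    noncomm_ring

lemma eps_isLie {r : ℕ} {u : AA n} (h : IsLie r u) : eps u = 0 := by
  induction h with
  | of x => exact eps_gen x
  | brk hu hv ihu ihv => rw [map_sub, map_mul, map_mul, ihu, ihv]; ring

/-- Dynkin–Specht–Wever. -/
lemma BB_isLie {r : ℕ} {u : AA n} (h : IsLie r u) : BB u = (r : ℚ) • u := by
  induction h with
  | of x =>
    have : gen (n := n) x = wmon [x] := by simp
    rw [this, BB_wmon]
    simp [cbr]
  | @brk r s u v hu hv ihu ihv =>
    rw [map_sub, L2 u v, L2 v u, GG_isLie hu, GG_isLie hv, eps_isLie hu, eps_isLie hv,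
      ihu, ihv]
    simp only [MulOpposite.unop_op, LinearMap.neg_apply, LinearMap.map_smul, adE_apply,
      zero_smul, add_zero]
    push_cast
    rw [smul_sub, smul_sub]
    module

lemma isLie_cm {r : ℕ} {u : AA n} (h : IsLie r u) (l : List (Fin (n+1))) :
    IsLie (r + l.length) (cm u l) := by
  induction l generalizing u r with
  | nil => simpa using h
  | cons y l ih =>
    rw [cm_cons]
    have h2 : IsLie (r + 1) (u * gen y - gen y * u) := h.brk (IsLie.of y)
    have := ih h2
    rw [show r + 1 + l.length = r + (y :: l).length by simp; omega] at this
    exact this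

lemma isLie_cbr (l : List (Fin (n+1))) (hl : l ≠ []) : IsLie l.length (cbr l) := by
  cases l with
  | nil => exact absurd rfl hl
  | cons x l =>
    have := isLie_cm (IsLie.of (n := n) x) l
    rw [show 1 + l.length = (x :: l).length by simp; omega] at this
    exact this


/-! ### The group algebra side -/

def wl (h : Equiv.Perm (Fin (n+1))) : List (Fin (n+1)) := List.ofFn (fun i => h⁻¹ i)

@[simp] lemma wl_length (h : Equiv.Perm (Fin (n+1))) : (wl h).length = n + 1 := by
  simp [wl]

lemma wl_injective : Function.Injective (wl (n := n)) := by
  intro g g' hgg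
  have h1 : (fun i : Fin (n+1) => g⁻¹ i) = fun i => g'⁻¹ i := List.ofFn_injective hgg
  have : g⁻¹ = g'⁻¹ := Equiv.ext (fun i => congrFun h1 i)
  have h2 := congrArg (·⁻¹) this
  simpa using h2

def Phi : MAn n →ₗ[ℚ] AA n :=
  Finsupp.linearCombination ℚ (fun g => wmon (wl g)) ∘ₗ (MonoidAlgebra.coeffLinearEquiv ℚ).toLinearMap

@[simp] lemma Phi_single (h : Equiv.Perm (Fin (n+1))) (c : ℚ) :
    Phi (MonoidAlgebra.single h c) = c • wmon (wl h) := by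
  rw [Phi, LinearMap.comp_apply]; exact Finsupp.linearCombination_single _ _ _

lemma Phi_injective : Function.Injective (Phi (n := n)) := by
  have hli : LinearIndependent ℚ (fun g : Equiv.Perm (Fin (n+1)) => wmon (wl g)) := by
    have : (fun g : Equiv.Perm (Fin (n+1)) => wmon (wl g))
        = (bFM (n := n)) ∘ (fun g => FreeMonoid.ofList (wl g)) := by
      funext g; exact wmon_eq_basis (wl g)
    rw [this]
    exact (bFM (n := n)).linearIndependent.comp _
      (FreeMonoid.ofList.injective.comp wl_injective)
  rw [Phi, LinearMap.coe_comp]; exact Function.Injective.comp hli (LinearEquiv.injective _)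


/-! ### List rotation lemmas for `cycleRange` -/

section ListLemmas
variable {β : Type*} {c : ℕ} (hc1 : 1 ≤ c) (hc2 : c ≤ n) (F : Fin (n+1) → β)

include hc2 in
lemma take_eq_concat :
    (List.ofFn F).take (c+1) = (List.ofFn F).take c ++ [F ⟨c, by omega⟩] := by
  apply List.ext_getElem
  · simp; omega
  intro i h1 h2
  rcases Nat.lt_or_ge i c with hic | hic
  · rw [List.getElem_append_left (by simp only [List.length_take, List.length_ofFn, List.length_cons, List.length_singleton]; omega)]
    simp only [List.getElem_take, List.getElem_ofFn]
  · have hi : i = c := by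
      simp only [List.length_take, List.length_ofFn] at h1
      omega
    subst hi
    rw [List.getElem_append_right (by simp only [List.length_take, List.length_ofFn, List.length_cons, List.length_singleton]; omega)]
    simp only [List.getElem_take, List.getElem_ofFn, List.length_take, List.length_ofFn,
      List.getElem_singleton]

include hc2 in
lemma drop_eq_cons :
    (List.ofFn F).drop c = F ⟨c, by omega⟩ :: (List.ofFn F).drop (c+1) := by
  apply List.ext_getElem
  · simp; omega
  intro i h1 h2
  cases i with
  | zero =>
    rw [List.getElem_drop, List.getElem_ofFn]
    simp
  | succ i =>
    rw [List.getElem_drop, List.getElem_cons_succ, List.getElem_drop,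
      List.getElem_ofFn, List.getElem_ofFn]
    congr 1
    simp only [Fin.mk.injEq]
    omega

include hc1 hc2 in
lemma drop_perm :
    (List.ofFn (fun i => F ((Fin.cycleRange (⟨c, by omega⟩ : Fin (n+1)))⁻¹ i))).drop (c+1)
      = (List.ofFn F).drop (c+1) := by
  apply List.ext_getElem
  · simp
  intro i h1 h2
  rw [List.getElem_drop, List.getElem_drop, List.getElem_ofFn, List.getElem_ofFn]
  congr 1
  rw [Equiv.Perm.inv_eq_iff_eq]
  exact (Fin.cycleRange_of_gt (by simp only [Fin.lt_def]; omega)).symm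

include hc1 hc2 in
lemma take_perm :
    (List.ofFn (fun i => F ((Fin.cycleRange (⟨c, by omega⟩ : Fin (n+1)))⁻¹ i))).take (c+1)
      = F ⟨c, by omega⟩ :: (List.ofFn F).take c := by
  apply List.ext_getElem
  · simp only [List.length_take, List.length_ofFn, List.length_cons]; omega
  intro i h1 h2
  rw [List.getElem_take, List.getElem_ofFn]
  cases i with
  | zero =>
    rw [List.getElem_cons_zero]
    congr 1
    rw [Equiv.Perm.inv_eq_iff_eq]
    exact (Fin.cycleRange_self _).symm
  | succ i =>
    have hi : i < c := by
      simp only [List.length_take, List.length_ofFn] at h1 ⊢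
      omega
    rw [List.getElem_cons_succ, List.getElem_take, List.getElem_ofFn]
    congr 1
    rw [Equiv.Perm.inv_eq_iff_eq]
    rw [Fin.cycleRange_of_lt (by simp only [Fin.lt_def]; omega)]
    apply Fin.ext
    rw [Fin.val_add_one_of_lt (by simp only [Fin.lt_def, Fin.val_last]; omega)]

end ListLemmas

/-! ### The Dynkin element as a recursive product -/

def efac (m : ℕ) : MAn n :=
  1 - MonoidAlgebra.of ℚ (Equiv.Perm (Fin (n+1))) (Fin.cycleRange ⟨n - m, by omega⟩)

def PP : ℕ → MAn n
  | 0 => 1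
  | m+1 => PP m * efac m

lemma prodrange (m : ℕ) : ((List.range m).map (efac (n := n))).prod = PP m := by
  induction m with
  | zero => rfl
  | succ m ih => rw [List.range_succ, List.map_append, List.prod_append]; simp [PP, ih]

end DynkinAux

/-- The Dynkin element `p_k = (1-σ_k)(1-σ_{k-1})⋯(1-σ_2)` in the rational group algebra of
the symmetric group on `{1,...,k}`, where `σ_i = (1 2 ⋯ i)` is the `i`-cycle
(`Fin.cycleRange ⟨i-1,_⟩` is the cycle `(0 1 ⋯ i-1)` of length `i`). -/
noncomputable def dynkinElement (k : ℕ) : MonoidAlgebra ℚ (Equiv.Perm (Fin k)) :=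
  ((List.finRange (k - 1)).map fun j =>
    (1 : MonoidAlgebra ℚ (Equiv.Perm (Fin k))) -
      MonoidAlgebra.of ℚ (Equiv.Perm (Fin k))
        (Fin.cycleRange ⟨k - 1 - j.1, by have := j.isLt; omega⟩)).prod

namespace DynkinAux
variable {n : ℕ}

lemma dynkin_eq : dynkinElement (n+1) = PP (n := n) n := by
  rw [dynkinElement, ← prodrange, ← (show (List.finRange n).map Fin.val = List.range n from List.ext_getElem (by simp) (by simp)), List.map_map]
  simp only [Nat.add_sub_cancel]
  apply congrArg
  apply List.map_congr_left
  intro j _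
  simp only [Function.comp_apply, efac]


lemma master : ∀ m, m ≤ n → ∀ h : Equiv.Perm (Fin (n+1)),
    Phi (PP m * MonoidAlgebra.single h 1)
      = cm (wmon ((wl h).take (n+1-m))) ((wl h).drop (n+1-m)) := by
  intro m
  induction m with
  | zero =>
    intro _ h
    rw [PP, one_mul, Phi_single, one_smul, Nat.sub_zero]
    rw [List.take_of_length_le (by simp), List.drop_of_length_le (by simp)]
    rfl
  | succ m ih =>
    intro hm h
    have hc1 : 1 ≤ n - m := by omega
    have hc2 : n - m ≤ n := by omega
    set σ : Equiv.Perm (Fin (n+1)) := Fin.cycleRange ⟨n - m, by omega⟩ with hσ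
    have hsplit : PP (m+1) * MonoidAlgebra.single h (1:ℚ)
        = PP m * MonoidAlgebra.single h 1 - PP m * MonoidAlgebra.single (σ * h) 1 := by
      rw [PP, mul_assoc, ← mul_sub]
      congr 1
      rw [efac, sub_mul, one_mul, MonoidAlgebra.of_apply,
        MonoidAlgebra.single_mul_single, one_mul]
    rw [hsplit, map_sub, ih (by omega) h, ih (by omega) (σ * h)]
    have hwl : wl (σ * h) = List.ofFn (fun i => h⁻¹ (σ⁻¹ i)) := by
      simp [wl, mul_inv_rev, Equiv.Perm.mul_apply]
    have e1 : n + 1 - m = (n - m) + 1 := by omega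
    have e2 : n + 1 - (m+1) = n - m := by omega
    rw [e1, e2, hwl, hσ]
    rw [take_perm hc1 hc2 (fun i => h⁻¹ i), drop_perm hc1 hc2 (fun i => h⁻¹ i)]
    show cm (wmon (((List.ofFn fun i => h⁻¹ i)).take (n-m+1)))
        (((List.ofFn fun i => h⁻¹ i)).drop (n-m+1)) - _
      = cm (wmon (((List.ofFn fun i => h⁻¹ i)).take (n-m)))
        (((List.ofFn fun i => h⁻¹ i)).drop (n-m))
    rw [take_eq_concat hc2 (fun i => h⁻¹ i), drop_eq_cons hc2 (fun i => h⁻¹ i)]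
    rw [wmon_append, wmon_cons, wmon_cons, wmon_nil, mul_one, cm_cons, ← cm_sub]

lemma hstep (h : Equiv.Perm (Fin (n+1))) :
    Phi (PP (n := n) n * MonoidAlgebra.single h 1) = cbr (wl h) := by
  rw [master n le_rfl h, show n+1-n = 1 by omega]
  obtain ⟨x, l, hw⟩ : ∃ x l, wl h = x :: l := by
    cases hwl : wl h with
    | nil => have := wl_length h; rw [hwl] at this; simp at this
    | cons a b => exact ⟨a, b, rfl⟩
  rw [hw]
  show cm (wmon [x]) l = cm (gen x) l
  rw [wmon_cons, wmon_nil, mul_one]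

lemma key (f : MAn n) : Phi (PP n * f) = BB (Phi f) := by
  induction f using MonoidAlgebra.induction_linear with
  | zero => simp only [mul_zero, map_zero]
  | add f g hf hg => rw [mul_add, map_add, map_add, map_add, hf, hg]
  | single h c =>
    show Phi (PP n * MonoidAlgebra.single h c) = BB (Phi (MonoidAlgebra.single h c))
    have hs : MonoidAlgebra.single h c = c • MonoidAlgebra.single h (1:ℚ) := by
      rw [MonoidAlgebra.smul_single', mul_one]
    rw [hs, mul_smul_comm, map_smul, map_smul, map_smul, hstep, Phi_single, one_smul, BB_wmon]

lemma isLie_wl1 : IsLie (n+1) (cbr (wl (1 : Equiv.Perm (Fin (n+1))))) := by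
  have hne : wl (1 : Equiv.Perm (Fin (n+1))) ≠ [] := by
    intro hnil
    have := wl_length (n := n) 1
    rw [hnil] at this
    simp at this
  have := isLie_cbr _ hne
  rwa [wl_length] at this

end DynkinAux

open DynkinAux

/-- `p_k² = k · p_k` (the Dynkin idempotent property). -/
theorem dynkinElement_sq (k : ℕ) (hk : 1 ≤ k) :
    dynkinElement k * dynkinElement k =
      (k : MonoidAlgebra ℚ (Equiv.Perm (Fin k))) * dynkinElement k := by
  obtain ⟨n, rfl⟩ : ∃ n, k = n + 1 := ⟨k - 1, by omega⟩
  apply Phi_injective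
  rw [dynkin_eq]
  have h2 : Phi (PP (n := n) n) = cbr (wl 1) := by
    have hh := hstep (n := n) 1
    rwa [← MonoidAlgebra.one_def, mul_one] at hh
  calc Phi (PP n * PP n) = BB (Phi (PP n)) := key (PP n)
    _ = ((n+1 : ℕ) : ℚ) • cbr (wl 1) := by rw [h2]; exact BB_isLie isLie_wl1
    _ = Phi (((n+1 : ℕ) : ℚ) • PP n) := by rw [map_smul, h2]
    _ = Phi ((((n+1 : ℕ)) : MAn n) * PP n) := by
        rw [← nsmul_eq_mul, ← Nat.cast_smul_eq_nsmul ℚ]
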